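/- For any 0 ≤ a < b ≤ 1, any y ∈ [0,1] and any β ∈ ℝ, one has ∫_0^y u(a,t,β) dt = ∫_0^{y'} u(a/b, t, b·β) dt, where y' := (1/b)·∫_0^b ∫_0^y u(x,t,β) dt dx. -/

import Mathlib

open Filter Finset MeasureTheory

/-- Number of inversions of a permutation of `Fin n`. -/
def inversions (n : ℕ) (π : Equiv.Perm (Fin n)) : ℕ :=
  (Finset.univ.filter (fun p : Fin n × Fin n => p.1 < p.2 ∧ π p.2 < π p.1)).card

/-- The `(n,q)`-Mallows probability mass function on `S_n`. -/
noncomputable def mallowsPMF (n : ℕ) (q : ℝ) (π : Equiv.Perm (Fin n)) : ℝ :=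
  q ^ inversions n π / ∑ σ : Equiv.Perm (Fin n), q ^ inversions n σ

open Classical in
/-- The `(n,q)`-Mallows probability of an event `P` of permutations. -/
noncomputable def mallowsProb (n : ℕ) (q : ℝ) (P : Equiv.Perm (Fin n) → Prop) : ℝ :=
  ∑ π : Equiv.Perm (Fin n), if P π then mallowsPMF n q π else 0

/-- Expectation with respect to the `(n,q)`-Mallows measure. -/
noncomputable def mallowsExp (n : ℕ) (q : ℝ) (f : Equiv.Perm (Fin n) → ℝ) : ℝ :=
  ∑ π : Equiv.Perm (Fin n), mallowsPMF n q π * f π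

/-- Action of a permutation of `Fin n` on one-based indices `{1,…,n}`. -/
def permAct (n : ℕ) (π : Equiv.Perm (Fin n)) (i : ℕ) : ℕ :=
  if h : 1 ≤ i ∧ i ≤ n then ((π ⟨i - 1, by omega⟩ : Fin n) : ℕ) + 1 else i

/-- The limiting density `u(x,y,β)` from Starr's theorem. -/
noncomputable def mallowsU (x y β : ℝ) : ℝ :=
  if β = 0 then 1
  else (β / 2) * Real.sinh (β / 2) /
    (Real.exp (β / 4) * Real.cosh (β * (x - y) / 2)
      - Real.exp (-β / 4) * Real.cosh (β * (x + y - 1) / 2)) ^ 2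

noncomputable def uden (β x t : ℝ) : ℝ :=
  Real.exp β * (Real.exp (β*x) - 1) + Real.exp (β*t) * (Real.exp β - Real.exp (β*x))

noncomputable def gA (β x y : ℝ) : ℝ :=
  Real.exp β * (Real.exp (β*y) - 1) / uden β x y

lemma uden_pos {β x t : ℝ} (hβ : 0 < β) (hx : x ∈ Set.Icc (0:ℝ) 1)
    (ht : t ∈ Set.Icc (0:ℝ) 1) : 0 < uden β x t := by
  have h1 : (1:ℝ) ≤ Real.exp (β*x) := Real.one_le_exp (mul_nonneg hβ.le hx.1)
  have h3 : Real.exp (β*t) ≤ Real.exp β := Real.exp_le_exp.2 (by nlinarith [ht.2])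
  have h4 : 0 < Real.exp (β*t) := Real.exp_pos _
  have h5 : 1 < Real.exp β := by
    rw [← Real.exp_zero]; exact Real.exp_lt_exp.2 hβ
  unfold uden
  nlinarith [mul_nonneg (sub_nonneg.2 h1) (sub_nonneg.2 h3), mul_pos h4 (sub_pos.2 h5)]

lemma uden_neg {β x t : ℝ} (hβ : β < 0) (hx : x ∈ Set.Icc (0:ℝ) 1)
    (ht : t ∈ Set.Icc (0:ℝ) 1) : uden β x t < 0 := by
  have h1 : Real.exp β ≤ Real.exp (β*x) := Real.exp_le_exp.2 (by nlinarith [hx.2])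
  have h3 : Real.exp β ≤ Real.exp (β*t) := Real.exp_le_exp.2 (by nlinarith [ht.2])
  have h5 : Real.exp β < 1 := by
    rw [← Real.exp_zero]; exact Real.exp_lt_exp.2 hβ
  have h6 : 0 < Real.exp β := Real.exp_pos _
  unfold uden
  nlinarith [mul_nonneg (sub_nonneg.2 h1) (sub_nonneg.2 h3), mul_pos h6 (sub_pos.2 h5)]

lemma uden_ne {β x t : ℝ} (hβ : β ≠ 0) (hx : x ∈ Set.Icc (0:ℝ) 1)
    (ht : t ∈ Set.Icc (0:ℝ) 1) : uden β x t ≠ 0 := by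
  rcases hβ.lt_or_gt with h | h
  · exact (uden_neg h hx ht).ne
  · exact (uden_pos h hx ht).ne'

lemma cosh_diff_eq (β x t : ℝ) :
    Real.exp (β/4) * Real.cosh (β*(x-t)/2) - Real.exp (-β/4) * Real.cosh (β*(x+t-1)/2)
      = uden β x t / (2 * Real.exp (β*(x+t)/2 + 3*β/4)) := by
  have h1 : Real.exp (β*(x-t)/2) = Real.exp (β*x/2) / Real.exp (β*t/2) := by
    rw [← Real.exp_sub]; congr 1; ring
  have h2 : Real.exp (-(β*(x-t)/2)) = Real.exp (β*t/2) / Real.exp (β*x/2) := by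
    rw [← Real.exp_sub]; congr 1; ring
  have h3 : Real.exp (β*(x+t-1)/2)
      = Real.exp (β*x/2) * Real.exp (β*t/2) / (Real.exp (β/4))^2 := by
    rw [← Real.exp_nat_mul, ← Real.exp_add, ← Real.exp_sub]; congr 1; push_cast; ring
  have h4 : Real.exp (-(β*(x+t-1)/2))
      = (Real.exp (β/4))^2 / (Real.exp (β*x/2) * Real.exp (β*t/2)) := by
    rw [← Real.exp_nat_mul, ← Real.exp_add, ← Real.exp_sub]; congr 1; push_cast; ring
  have h5 : Real.exp (-β/4) = 1 / Real.exp (β/4) := by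
    rw [show -β/4 = 0 - β/4 by ring, Real.exp_sub, Real.exp_zero]
  have h6 : Real.exp β = (Real.exp (β/4))^4 := by
    rw [← Real.exp_nat_mul]; congr 1; push_cast; ring
  have h7 : Real.exp (β*x) = (Real.exp (β*x/2))^2 := by
    rw [← Real.exp_nat_mul]; congr 1; push_cast; ring
  have h8 : Real.exp (β*t) = (Real.exp (β*t/2))^2 := by
    rw [← Real.exp_nat_mul]; congr 1; push_cast; ring
  have h9 : Real.exp (β*(x+t)/2 + 3*β/4)
      = Real.exp (β*x/2) * Real.exp (β*t/2) * (Real.exp (β/4))^3 := by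
    rw [← Real.exp_nat_mul, ← Real.exp_add, ← Real.exp_add]; congr 1; push_cast; ring
  rw [Real.cosh_eq, Real.cosh_eq]
  unfold uden
  rw [h1, h2, h3, h4, h5, h6, h7, h8, h9]
  have e1 := Real.exp_ne_zero (β/4)
  have e2 := Real.exp_ne_zero (β*x/2)
  have e3 := Real.exp_ne_zero (β*t/2)
  field_simp
  ring

lemma mallowsU_formula {β : ℝ} (x t : ℝ) (hβ : β ≠ 0) (hd : uden β x t ≠ 0) :
    mallowsU x t β = β * Real.exp β * (Real.exp β - 1) * Real.exp (β*x) * Real.exp (β*t)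
      / (uden β x t)^2 := by
  rw [mallowsU, if_neg hβ, cosh_diff_eq, Real.sinh_eq]
  have h1 : Real.exp (-(β/2)) = 1 / Real.exp (β/2) := by
    rw [show -(β/2) = 0 - β/2 by ring, Real.exp_sub, Real.exp_zero]
  have h2 : Real.exp β = (Real.exp (β/2))^2 := by
    rw [← Real.exp_nat_mul]; congr 1; push_cast; ring
  have h3 : (Real.exp (β*(x+t)/2 + 3*β/4))^2
      = Real.exp (β*x) * Real.exp (β*t) * (Real.exp (β/2))^3 := by
    rw [← Real.exp_nat_mul, ← Real.exp_nat_mul, ← Real.exp_add, ← Real.exp_add]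
    congr 1; push_cast; ring
  rw [div_pow, mul_pow, h3, div_div_eq_mul_div, h1, h2]
  have e1 := Real.exp_ne_zero (β/2)
  have e2 := Real.exp_ne_zero (β*x)
  have e3 := Real.exp_ne_zero (β*t)
  field_simp

lemma hasDerivAt_gA {β x t : ℝ} (hd : uden β x t ≠ 0) :
    HasDerivAt (fun s => gA β x s)
      (β * Real.exp β * (Real.exp β - 1) * Real.exp (β*x) * Real.exp (β*t)
        / (uden β x t)^2) t := by
  have hexp : HasDerivAt (fun s : ℝ => Real.exp (β*s)) (β * Real.exp (β*t)) t := by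
    have := ((hasDerivAt_id t).const_mul β).exp
    simpa [mul_comm] using this
  have hn : HasDerivAt (fun s => Real.exp β * (Real.exp (β*s) - 1))
      (Real.exp β * (β * Real.exp (β*t))) t := ((hexp.sub_const 1).const_mul _)
  have hden : HasDerivAt (fun s => uden β x s)
      (β * Real.exp (β*t) * (Real.exp β - Real.exp (β*x))) t := by
    unfold uden
    simpa using ((hexp.mul_const (Real.exp β - Real.exp (β*x))).const_add
      (Real.exp β * (Real.exp (β*x) - 1)))
  have := hn.div hden hd
  refine this.congr_deriv ?_
  rw [div_eq_div_iff (pow_ne_zero 2 hd) (pow_ne_zero 2 hd)]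
  unfold uden
  ring

lemma continuousOn_uden (β x : ℝ) : ContinuousOn (fun t => uden β x t) (Set.uIcc 0 1) := by
  unfold uden; fun_prop

lemma integral_mallowsU {β x y : ℝ} (hβ : β ≠ 0) (hx : x ∈ Set.Icc (0:ℝ) 1)
    (hy : y ∈ Set.Icc (0:ℝ) 1) :
    (∫ t in (0:ℝ)..y, mallowsU x t β) = gA β x y := by
  have hsub : Set.uIcc (0:ℝ) y ⊆ Set.Icc (0:ℝ) 1 := by
    rw [Set.uIcc_of_le hy.1]
    exact Set.Icc_subset_Icc le_rfl hy.2
  have key : ∫ t in (0:ℝ)..y, mallowsU x t β = gA β x y - gA β x 0 := by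
    apply intervalIntegral.integral_eq_sub_of_hasDerivAt
    · intro t ht
      have hd := uden_ne hβ hx (hsub ht)
      rw [mallowsU_formula x t hβ hd]
      exact hasDerivAt_gA hd
    · apply ContinuousOn.intervalIntegrable
      apply ContinuousOn.congr
        (f := fun t => β * Real.exp β * (Real.exp β - 1) * Real.exp (β*x) * Real.exp (β*t)
          / (uden β x t)^2)
      · apply ContinuousOn.div (by fun_prop)
        · unfold uden; fun_prop
        · intro t ht
          exact pow_ne_zero 2 (uden_ne hβ hx (hsub ht))
      · intro t ht
        exact mallowsU_formula x t hβ (uden_ne hβ hx (hsub ht))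
  rw [key]
  simp [gA]

lemma gA_mem {β x y : ℝ} (hβ : β ≠ 0) (hx : x ∈ Set.Icc (0:ℝ) 1)
    (hy : y ∈ Set.Icc (0:ℝ) 1) : gA β x y ∈ Set.Icc (0:ℝ) 1 := by
  unfold gA
  have hX0 : 0 < Real.exp (β*x) := Real.exp_pos _
  have hE0 : 0 < Real.exp β := Real.exp_pos _
  rcases hβ.lt_or_gt with h | h
  · have hd := uden_neg h hx hy
    have hY1 : Real.exp (β*y) ≤ 1 := by
      have : Real.exp (β*y) ≤ Real.exp 0 := Real.exp_le_exp.2 (by nlinarith [hy.1])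
      simpa using this
    have hEY : Real.exp β ≤ Real.exp (β*y) := Real.exp_le_exp.2 (by nlinarith [hy.2])
    constructor
    · apply div_nonneg_iff.mpr
      exact Or.inr ⟨by nlinarith, hd.le⟩
    · rw [div_le_one_iff]
      refine Or.inr (Or.inr ⟨hd, ?_⟩)
      unfold uden; nlinarith
  · have hd := uden_pos h hx hy
    have hY1 : 1 ≤ Real.exp (β*y) := Real.one_le_exp (by nlinarith [hy.1])
    have hEY : Real.exp (β*y) ≤ Real.exp β := Real.exp_le_exp.2 (by nlinarith [hy.2])
    constructor
    · apply div_nonneg (by nlinarith) hd.le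
    · rw [div_le_one hd]
      unfold uden; nlinarith

lemma integral_gA {β b y : ℝ} (hβ : β ≠ 0) (hb0 : 0 < b) (hb : b ≤ 1)
    (hy : y ∈ Set.Icc (0:ℝ) 1) :
    (∫ x in (0:ℝ)..b, gA β x y)
      = b - (1/β) * (Real.log (uden β b y)
          - Real.log (Real.exp (β*y) * (Real.exp β - 1))) := by
  have hsub : Set.uIcc (0:ℝ) b ⊆ Set.Icc (0:ℝ) 1 := by
    rw [Set.uIcc_of_le hb0.le]
    exact Set.Icc_subset_Icc le_rfl hb
  have hmem : ∀ x ∈ Set.uIcc (0:ℝ) b, x ∈ Set.Icc (0:ℝ) 1 := fun x hx => hsub hx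
  have key : (∫ x in (0:ℝ)..b, gA β x y)
      = (b - (1/β) * Real.log (uden β b y)) - (0 - (1/β) * Real.log (uden β 0 y)) := by
    apply intervalIntegral.integral_eq_sub_of_hasDerivAt
      (f := fun x => x - (1/β) * Real.log (uden β x y))
    · intro x hx
      have hd := uden_ne hβ (hmem x hx) hy
      have hexp : HasDerivAt (fun s : ℝ => Real.exp (β*s)) (β * Real.exp (β*x)) x := by
        have := ((hasDerivAt_id x).const_mul β).exp
        simpa [mul_comm] using this
      have hden : HasDerivAt (fun s => uden β s y)
          (β * Real.exp (β*x) * Real.exp β - β * Real.exp (β*x) * Real.exp (β*y)) x := by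
        unfold uden
        have h1 : HasDerivAt (fun s : ℝ => Real.exp β * (Real.exp (β*s) - 1))
            (Real.exp β * (β * Real.exp (β*x))) x := (hexp.sub_const 1).const_mul _
        have h2 : HasDerivAt (fun s : ℝ => Real.exp (β*y) * (Real.exp β - Real.exp (β*s)))
            (Real.exp (β*y) * (-(β * Real.exp (β*x)))) x :=
          ((hexp.const_sub (Real.exp β))).const_mul _
        refine (h1.add h2).congr_deriv ?_
        ring
      have hlog := (Real.hasDerivAt_log hd).comp x hden
      have := (hasDerivAt_id x).sub (hlog.const_mul (1/β))
      refine this.congr_deriv ?_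
      unfold gA
      field_simp
      unfold uden
      ring
    · apply ContinuousOn.intervalIntegrable
      unfold gA
      apply ContinuousOn.div (by fun_prop)
      · unfold uden; fun_prop
      · intro x hx; exact uden_ne hβ (hmem x hx) hy
  rw [key]
  have h0 : uden β 0 y = Real.exp (β*y) * (Real.exp β - 1) := by
    unfold uden; simp
  rw [h0]
  ring

lemma rescale_gA {β a b y : ℝ} (hβ : β ≠ 0) (ha : 0 ≤ a) (hab : a < b) (hb : b ≤ 1)
    (hy : y ∈ Set.Icc (0:ℝ) 1) :
    gA β a y = gA (b*β) (a/b)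
      ((1/b) * (b - (1/β) * (Real.log (uden β b y)
        - Real.log (Real.exp (β*y) * (Real.exp β - 1))))) := by
  have hb0 : 0 < b := lt_of_le_of_lt ha hab
  have hbm : b ∈ Set.Icc (0:ℝ) 1 := ⟨hb0.le, hb⟩
  have ham : a ∈ Set.Icc (0:ℝ) 1 := ⟨ha, hab.le.trans hb⟩
  have h0m : (0:ℝ) ∈ Set.Icc (0:ℝ) 1 := ⟨le_rfl, zero_le_one⟩
  have h0y : Real.exp (β*y) * (Real.exp β - 1) = uden β 0 y := by
    unfold uden; simp
  have hW : uden β b y ≠ 0 := uden_ne hβ hbm hy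
  have h0ne : uden β 0 y ≠ 0 := uden_ne hβ h0m hy
  have hdena : uden β a y ≠ 0 := uden_ne hβ ham hy
  rw [h0y]
  have hcomm : b*β = β*b := mul_comm b β
  rw [hcomm]
  have hgA : ∀ β' x' t' : ℝ, gA β' x' t' = Real.exp β' * (Real.exp (β'*t') - 1) /
      (Real.exp β' * (Real.exp (β'*x') - 1)
        + Real.exp (β'*t') * (Real.exp β' - Real.exp (β'*x'))) := fun _ _ _ => rfl
  rw [hgA, hgA]
  have harg : (β*b)*(a/b) = β*a := by field_simp
  have hratio : Real.exp (Real.log (uden β 0 y) - Real.log (uden β b y))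
      = uden β 0 y / uden β b y := by
    rcases hβ.lt_or_gt with h | h
    · have p1 := uden_neg h h0m hy
      have p2 := uden_neg h hbm hy
      rw [Real.exp_sub, ← Real.log_neg_eq_log (uden β 0 y),
        ← Real.log_neg_eq_log (uden β b y), Real.exp_log (by linarith),
        Real.exp_log (by linarith), neg_div_neg_eq]
    · have p1 := uden_pos h h0m hy
      have p2 := uden_pos h hbm hy
      rw [Real.exp_sub, Real.exp_log p1, Real.exp_log p2]
  have hexp : Real.exp ((β*b) * ((1/b) * (b - (1/β) * (Real.log (uden β b y)
        - Real.log (uden β 0 y)))))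
      = Real.exp (β*b) * (uden β 0 y / uden β b y) := by
    rw [show (β*b) * ((1/b) * (b - (1/β) * (Real.log (uden β b y)
        - Real.log (uden β 0 y))))
      = β*b + (Real.log (uden β 0 y) - Real.log (uden β b y)) by
        field_simp; ring]
    rw [Real.exp_add, hratio]
  rw [hexp, harg]
  set E := Real.exp β with hE
  set Xa := Real.exp (β*a) with hXa
  set Xb := Real.exp (β*b) with hXb
  set Y := Real.exp (β*y) with hY
  have hu0 : uden β 0 y = Y * (E - 1) := by rw [← h0y]
  have huW : uden β b y = E * (Xb - 1) + Y * (E - Xb) := by unfold uden; rfl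
  have hXb1 : Xb ≠ 1 := by
    rw [hXb, Ne, Real.exp_eq_one_iff]
    exact mul_ne_zero hβ hb0.ne'
  have hXb0 : Xb ≠ 0 := Real.exp_ne_zero _
  have hdena' : E * (Xa - 1) + Y * (E - Xa) ≠ 0 := by
    have : uden β a y = E * (Xa - 1) + Y * (E - Xa) := by unfold uden; rfl
    rwa [this] at hdena
  rw [hu0, huW]
  have hW' : E*(Xb-1)+Y*(E-Xb) ≠ 0 := huW ▸ hW
  have hid : Xb * (Xa - 1) + (Xb * (Y*(E-1)/(E*(Xb-1)+Y*(E-Xb)))) * (Xb - Xa)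
      = Xb * (Xb - 1) * (E*(Xa-1)+Y*(E-Xa)) / (E*(Xb-1)+Y*(E-Xb)) := by
    field_simp [hW']
    ring
  rw [hid]
  have hne2 : Xb * (Xb - 1) * (E*(Xa-1)+Y*(E-Xa)) / (E*(Xb-1)+Y*(E-Xb)) ≠ 0 := by
    apply div_ne_zero _ hW
    exact mul_ne_zero (mul_ne_zero hXb0 (sub_ne_zero.2 hXb1)) hdena'
  rw [div_eq_div_iff hdena' hne2]
  field_simp [hW']
  ring

/-- **Lemma 5.2.** For `0 ≤ a < b ≤ 1`, `y ∈ [0,1]` and `β ∈ ℝ`,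
`∫₀^y u(a,t,β) dt = ∫₀^{y'} u(a/b, t, bβ) dt` where
`y' = (1/b) ∫₀^b ∫₀^y u(x,t,β) dt dx`. -/
theorem mallowsU_rescaling (a b y β : ℝ)
    (ha : 0 ≤ a) (hab : a < b) (hb : b ≤ 1) (hy : y ∈ Set.Icc (0 : ℝ) 1) :
    (∫ t in (0:ℝ)..y, mallowsU a t β)
      = ∫ t in (0:ℝ)..((1 / b) * ∫ x in (0:ℝ)..b, ∫ s in (0:ℝ)..y, mallowsU x s β),
          mallowsU (a / b) t (b * β) := by
  have hb0 : 0 < b := lt_of_le_of_lt ha hab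
  rcases eq_or_ne β 0 with h0 | hβ
  · subst h0
    have hU : ∀ x t : ℝ, mallowsU x t 0 = 1 := fun _ _ => if_pos rfl
    simp only [mul_zero, hU, intervalIntegral.integral_const, smul_eq_mul, mul_one, sub_zero]
    field_simp
  · have hbβ : b * β ≠ 0 := mul_ne_zero hb0.ne' hβ
    have ham : a ∈ Set.Icc (0:ℝ) 1 := ⟨ha, hab.le.trans hb⟩
    have habm : a/b ∈ Set.Icc (0:ℝ) 1 :=
      ⟨div_nonneg ha hb0.le, (div_le_one hb0).2 hab.le⟩
    have hsub : Set.uIcc (0:ℝ) b ⊆ Set.Icc (0:ℝ) 1 := by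
      rw [Set.uIcc_of_le hb0.le]
      exact Set.Icc_subset_Icc le_rfl hb
    have hinner : (∫ x in (0:ℝ)..b, ∫ s in (0:ℝ)..y, mallowsU x s β)
        = ∫ x in (0:ℝ)..b, gA β x y :=
      intervalIntegral.integral_congr (fun x hx => integral_mallowsU hβ (hsub hx) hy)
    have hcont : IntervalIntegrable (fun x => gA β x y) MeasureTheory.volume 0 b := by
      apply ContinuousOn.intervalIntegrable
      unfold gA
      apply ContinuousOn.div (by fun_prop)
      · unfold uden; fun_prop
      · intro x hx; exact uden_ne hβ (hsub hx) hy
    have hIle : (∫ x in (0:ℝ)..b, gA β x y) ≤ b := by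
      calc (∫ x in (0:ℝ)..b, gA β x y) ≤ ∫ _x in (0:ℝ)..b, (1:ℝ) :=
            intervalIntegral.integral_mono_on hb0.le hcont intervalIntegrable_const
              (fun x hx => (gA_mem hβ ⟨hx.1, hx.2.trans hb⟩ hy).2)
        _ = b := by simp
    have hI0 : 0 ≤ ∫ x in (0:ℝ)..b, gA β x y :=
      intervalIntegral.integral_nonneg hb0.le
        (fun x hx => (gA_mem hβ ⟨hx.1, hx.2.trans hb⟩ hy).1)
    have hy' : (1/b) * (∫ x in (0:ℝ)..b, ∫ s in (0:ℝ)..y, mallowsU x s β)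
        ∈ Set.Icc (0:ℝ) 1 := by
      rw [hinner]
      constructor
      · exact mul_nonneg (by positivity) hI0
      · calc (1/b) * (∫ x in (0:ℝ)..b, gA β x y) ≤ (1/b) * b :=
              mul_le_mul_of_nonneg_left hIle (by positivity)
          _ = 1 := by field_simp
    rw [integral_mallowsU hβ ham hy, integral_mallowsU hbβ habm hy']
    rw [hinner, integral_gA hβ hb0 hb hy]
    exact rescale_gA hβ ha hab hb hy
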